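/- Let L = (l_1,...,l_N) be a finite sequence of lines in F^d and P ∈ F^d. For 1 ≤ j ≤ d define r_j(P, L) as the minimum over all (j-1)-dimensional linear subspaces V of F^d of the number of indices i with P ∈ l_i and l_i not parallel to V. Let M(P) be the number of ordered d-tuples of indices (i_1,...,i_d) such that l_{i_1},...,l_{i_d} pass through P with linearly independent directions. Then c(d) * Π_{j=1}^d r_j(P,L) ≤ M(P) ≤ C(d) * Π_{j=1}^d r_j(P,L). -/

import Mathlib

def IsLine {F : Type} [Field F] {d : ℕ} (s : Set (Fin d → F)) : Prop :=
  ∃ a v : Fin d → F, v ≠ 0 ∧ s = {x | ∃ t : F, x = a + t • v}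

def lineThrough {F : Type} [Field F] {d : ℕ} (P v : Fin d → F) : Set (Fin d → F) :=
  {x | ∃ t : F, x = P + t • v}

/-- A line is parallel to a linear subspace `V` if its direction lies in `V`. -/
def LineParallel {F : Type} [Field F] {d : ℕ} (s : Set (Fin d → F))
    (V : Submodule F (Fin d → F)) : Prop :=
  ∃ a v : Fin d → F, v ≠ 0 ∧ s = {x | ∃ t : F, x = a + t • v} ∧ v ∈ V

/-- The `j`-th minimum `r_j(P, L)`: the minimum over `(j-1)`-dimensional linear
subspaces `V` of the number of indices `i` with `P ∈ l_i` and `l_i` not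
parallel to `V`. -/
noncomputable def jthMin {F : Type} [Field F] {d N : ℕ}
    (l : Fin N → Set (Fin d → F)) (P : Fin d → F) (j : ℕ) : ℕ :=
  sInf {k : ℕ | ∃ V : Submodule F (Fin d → F), Module.finrank F V = j - 1 ∧
    k = Set.ncard {i : Fin N | P ∈ l i ∧ ¬ LineParallel (l i) V}}

noncomputable def jointMult {F : Type} [Field F] {d N : ℕ}
    (l : Fin N → Set (Fin d → F)) (P : Fin d → F) : ℕ :=
  Set.ncard {ι : Fin d → Fin N |
    ∃ v : Fin d → (Fin d → F), LinearIndependent F v ∧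
      ∀ j, l (ι j) = lineThrough P (v j)}

section Lines
variable {F : Type} [Field F] {d : ℕ}

lemma mem_lineThrough_self (P v : Fin d → F) : P ∈ lineThrough P v :=
  ⟨0, by simp⟩

lemma line_eq_lineThrough {a v P : Fin d → F} (hP : P ∈ {x | ∃ t : F, x = a + t • v}) :
    {x | ∃ t : F, x = a + t • v} = lineThrough P v := by
  obtain ⟨t0, ht0⟩ := hP
  ext x
  constructor
  · rintro ⟨t, rfl⟩
    exact ⟨t - t0, by rw [ht0]; module⟩
  · rintro ⟨t, rfl⟩
    exact ⟨t0 + t, by rw [ht0]; module⟩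

lemma dir_smul_of_lineThrough_eq {P v w : Fin d → F} (hw : w ≠ 0)
    (h : lineThrough P v = lineThrough P w) : ∃ c : F, c ≠ 0 ∧ w = c • v := by
  have hmem : P + w ∈ lineThrough P v := by
    rw [h]; exact ⟨1, by simp⟩
  obtain ⟨t, ht⟩ := hmem
  have hw' : w = t • v := by
    have := ht
    apply add_left_cancel (a := P)
    exact this
  exact ⟨t, fun h0 => hw (by simp [hw', h0]), hw'⟩

lemma lineParallel_iff {l : Set (Fin d → F)} {P u : Fin d → F} (hu : u ≠ 0)
    (hl : l = lineThrough P u) (V : Submodule F (Fin d → F)) :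
    LineParallel l V ↔ u ∈ V := by
  constructor
  · rintro ⟨a, w, hw0, heq, hwV⟩
    have hPl : P ∈ {x | ∃ t : F, x = a + t • w} := by
      rw [← heq, hl]; exact mem_lineThrough_self P u
    have h2 : lineThrough P u = lineThrough P w := by
      rw [← line_eq_lineThrough hPl, ← heq, hl]
    obtain ⟨c, hc0, hcw⟩ := dir_smul_of_lineThrough_eq hw0 h2
    have : u = c⁻¹ • w := by rw [hcw, smul_smul, inv_mul_cancel₀ hc0, one_smul]
    rw [this]; exact V.smul_mem _ hwV
  · intro hV
    exact ⟨P, u, hu, by rw [hl]; rfl, hV⟩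

end Lines


open Classical in
lemma lower_count {F : Type} [Field F] {d N : ℕ} (S : Finset (Fin N))
    (u : Fin N → Fin d → F) (r : ℕ → ℕ)
    (hr : ∀ (k : ℕ) (V : Submodule F (Fin d → F)), k < d → Module.finrank F ↥V = k →
      r k ≤ (S.filter (fun i => u i ∉ V)).card) :
    ∀ k, k ≤ d → ∏ j ∈ Finset.range k, r j ≤
      (Finset.univ.filter (fun ι : Fin k → Fin N =>
        (∀ j, ι j ∈ S) ∧ LinearIndependent F (u ∘ ι))).card := by
  intro k
  induction k with
  | zero =>
    intro _
    simp only [Finset.range_zero, Finset.prod_empty]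
    rw [Nat.one_le_iff_ne_zero, ← Nat.pos_iff_ne_zero, Finset.card_pos]
    refine ⟨finZeroElim, Finset.mem_filter.2 ⟨Finset.mem_univ _, fun j => j.elim0, ?_⟩⟩
    exact linearIndependent_empty_type
  | succ k ih =>
    intro hk1
    have hk : k < d := hk1
    set Tk := Finset.univ.filter (fun ι : Fin k → Fin N =>
        (∀ j, ι j ∈ S) ∧ LinearIndependent F (u ∘ ι)) with hTk
    set Tk1 := Finset.univ.filter (fun ι : Fin (k+1) → Fin N =>
        (∀ j, ι j ∈ S) ∧ LinearIndependent F (u ∘ ι)) with hTk1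
    have hres : ∀ ι ∈ Tk1, (ι ∘ Fin.castSucc : Fin k → Fin N) ∈ Tk := by
      intro ι hι
      rw [hTk1, Finset.mem_filter] at hι
      obtain ⟨-, hS, hli⟩ := hι
      refine Finset.mem_filter.2 ⟨Finset.mem_univ _, fun j => hS _, ?_⟩
      have : (u ∘ (ι ∘ Fin.castSucc)) = (u ∘ ι) ∘ Fin.castSucc := rfl
      rw [this]
      exact hli.comp _ (Fin.castSucc_injective k)
    have hcard := Finset.card_eq_sum_card_fiberwise hres
    rw [hcard]
    have hfib : ∀ ι ∈ Tk, r k ≤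
        (Tk1.filter (fun ι' => (ι' ∘ Fin.castSucc : Fin k → Fin N) = ι)).card := by
      intro ι hι
      rw [hTk, Finset.mem_filter] at hι
      obtain ⟨-, hS, hli⟩ := hι
      set V := Submodule.span F (Set.range (u ∘ ι)) with hV
      have hVrank : Module.finrank F ↥V = k := by
        rw [hV, finrank_span_eq_card hli, Fintype.card_fin]
      refine le_trans (hr k V hk hVrank) ?_
      apply Finset.card_le_card_of_injOn (f := fun i => (Fin.snoc ι i : Fin (k+1) → Fin N))
      · intro i hi
        rw [Finset.mem_coe, Finset.mem_filter] at hi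
        obtain ⟨hiS, hiV⟩ := hi
        beta_reduce
        refine Finset.mem_filter.2 ⟨Finset.mem_filter.2 ⟨Finset.mem_univ _, ?_, ?_⟩, ?_⟩
        · intro j
          refine Fin.lastCases ?_ ?_ j
          · rw [Fin.snoc_last]; exact hiS
          · intro j; rw [Fin.snoc_castSucc]; exact hS j
        · have heq : u ∘ (Fin.snoc ι i : Fin (k+1) → Fin N) =
              Fin.snoc (u ∘ ι) (u i) := by
            funext j
            refine Fin.lastCases ?_ ?_ j
            · simp [Fin.snoc_last]
            · intro j; simp [Fin.snoc_castSucc]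
          rw [heq, linearIndependent_fin_snoc]
          exact ⟨hli, by rwa [← hV]⟩
        · funext j; simp [Fin.snoc_castSucc]
      · intro i _ i' _ h
        have := congrFun h (Fin.last k)
        simpa [Fin.snoc_last] using this
    calc ∏ j ∈ Finset.range (k+1), r j = (∏ j ∈ Finset.range k, r j) * r k :=
          Finset.prod_range_succ _ _
      _ ≤ Tk.card * r k := Nat.mul_le_mul_right _ (ih (le_of_lt hk))
      _ = ∑ _ι ∈ Tk, r k := by rw [Finset.sum_const, smul_eq_mul, mul_comm]
      _ ≤ ∑ ι ∈ Tk, (Tk1.filter (fun ι' => (ι' ∘ Fin.castSucc : Fin k → Fin N) = ι)).card :=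
          Finset.sum_le_sum hfib


open Classical in
lemma exists_perm_avoid {F : Type} [Field F] {d : ℕ} (v : Fin d → (Fin d → F))
    (hv : LinearIndependent F v) (W : ℕ → Submodule F (Fin d → F))
    (hW : ∀ j, j < d → Module.finrank F ↥(W j) ≤ j) :
    ∃ σ : Equiv.Perm (Fin d), ∀ j : Fin d, v (σ j) ∉ W (j : ℕ) := by
  have hAcard : ∀ j : Fin d,
      d - (j : ℕ) ≤ (Finset.univ.filter (fun k => v k ∉ W (j : ℕ))).card := by
    intro j
    have hAcle : (Finset.univ.filter (fun k => v k ∈ W (j : ℕ))).card ≤ (j : ℕ) := by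
      refine le_trans ?_ (hW (j : ℕ) j.isLt)
      have hli : LinearIndependent F
          (fun k : {k : Fin d // k ∈ Finset.univ.filter (fun k => v k ∈ W (j : ℕ))} =>
          (⟨v k, (Finset.mem_filter.mp k.2).2⟩ : ↥(W (j : ℕ)))) := by
        apply LinearIndependent.of_comp (W (j : ℕ)).subtype
        exact hv.comp Subtype.val Subtype.val_injective
      have := hli.fintype_card_le_finrank
      rwa [Fintype.card_coe] at this
    have hcompl : (Finset.univ.filter (fun k => v k ∉ W (j : ℕ))).card =
        d - (Finset.univ.filter (fun k => v k ∈ W (j : ℕ))).card := by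
      rw [Finset.filter_not, Finset.card_sdiff_of_subset (Finset.filter_subset _ _),
        Finset.card_univ, Fintype.card_fin]
    omega
  have hall : ∀ J : Finset (Fin d), J.card ≤
      (J.biUnion (fun j => Finset.univ.filter (fun k => v k ∉ W (j : ℕ)))).card := by
    intro J
    rcases J.eq_empty_or_nonempty with rfl | hJ
    · simp
    · set j0 := J.min' hJ with hj0
      have h1 : J.card ≤ d - (j0 : ℕ) := by
        have himg : J.image (Fin.val) ⊆ Finset.Ico (j0 : ℕ) d := by
          intro x hx
          rw [Finset.mem_image] at hx
          obtain ⟨j, hjJ, rfl⟩ := hx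
          exact Finset.mem_Ico.2 ⟨J.min'_le j hjJ, j.isLt⟩
        have := Finset.card_le_card himg
        rwa [Finset.card_image_of_injective _ Fin.val_injective, Nat.card_Ico] at this
      have h2 : Finset.univ.filter (fun k => v k ∉ W ((j0 : Fin d) : ℕ)) ⊆
          J.biUnion (fun j => Finset.univ.filter (fun k => v k ∉ W (j : ℕ))) :=
        Finset.subset_biUnion_of_mem
          (fun j : Fin d => Finset.univ.filter (fun k => v k ∉ W (j : ℕ))) (J.min'_mem hJ)
      exact le_trans h1 (le_trans (hAcard j0) (Finset.card_le_card h2))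
  rw [Finset.all_card_le_biUnion_card_iff_exists_injective] at hall
  obtain ⟨f, hfinj, hf⟩ := hall
  refine ⟨Equiv.ofBijective f ((Fintype.bijective_iff_injective_and_card f).2 ⟨hfinj, rfl⟩), ?_⟩
  intro j
  have := hf j
  rw [Finset.mem_filter] at this
  exact this.2

open Classical in
lemma upper_count {F : Type} [Field F] {d N : ℕ} (S : Finset (Fin N))
    (u : Fin N → Fin d → F) (W : ℕ → Submodule F (Fin d → F))
    (hW : ∀ j, j < d → Module.finrank F ↥(W j) ≤ j) :
    (Finset.univ.filter (fun ι : Fin d → Fin N =>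
      (∀ j, ι j ∈ S) ∧ LinearIndependent F (u ∘ ι))).card ≤
    d.factorial * ∏ j ∈ Finset.range d, (S.filter (fun i => u i ∉ W j)).card := by
  set Td := Finset.univ.filter (fun ι : Fin d → Fin N =>
      (∀ j, ι j ∈ S) ∧ LinearIndependent F (u ∘ ι)) with hTd
  have hchoice : ∀ ι ∈ Td, ∃ σ : Equiv.Perm (Fin d), ∀ j : Fin d,
      u (ι (σ j)) ∉ W (j : ℕ) := by
    intro ι hι
    rw [hTd, Finset.mem_filter] at hι
    exact exists_perm_avoid (u ∘ ι) hι.2.2 W hW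
  set tgt : Finset (Equiv.Perm (Fin d) × (Fin d → Fin N)) :=
    Finset.univ ×ˢ Fintype.piFinset (fun j : Fin d => S.filter (fun i => u i ∉ W (j : ℕ)))
    with htgt
  have hle : Td.card ≤ tgt.card := by
    apply Finset.card_le_card_of_injOn
      (f := fun ι => if h : ι ∈ Td then ((hchoice ι h).choose, ι ∘ (hchoice ι h).choose)
        else (1, ι))
    · intro ι hι
      have hι2 : ι ∈ Td := hι
      simp only [dif_pos hι2]
      have hspec := (hchoice ι hι2).choose_spec
      rw [hTd, Finset.mem_filter] at hι2
      rw [htgt, Finset.mem_coe, Finset.mem_product]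
      refine ⟨Finset.mem_univ _, Fintype.mem_piFinset.2 fun j => ?_⟩
      exact Finset.mem_filter.2 ⟨hι2.2.1 _, hspec j⟩
    · intro ι hι ι' hι' h
      have hι2 : ι ∈ Td := hι
      have hι'2 : ι' ∈ Td := hι'
      simp only [dif_pos hι2, dif_pos hι'2] at h
      have h1 : (hchoice ι hι2).choose = (hchoice ι' hι'2).choose := congrArg Prod.fst h
      have h2 := congrArg Prod.snd h
      simp only at h2
      funext k
      have := congrFun h2 ((hchoice ι hι2).choose.symm k)
      simp only [Function.comp_apply] at this
      rw [h1] at this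
      simpa [Equiv.apply_symm_apply] using this
  refine le_trans hle ?_
  rw [htgt, Finset.card_product, Fintype.card_piFinset]
  rw [Finset.card_univ, Fintype.card_perm, Fintype.card_fin]
  exact le_of_eq (congrArg (d.factorial * ·)
    (Fin.prod_univ_eq_prod_range (fun j => (S.filter (fun i => u i ∉ W j)).card) d))

lemma exists_finrank_eq (F : Type) [Field F] (d j : ℕ) (h : j ≤ d) :
    ∃ V : Submodule F (Fin d → F), Module.finrank F ↥V = j := by
  refine ⟨Submodule.span F (Set.range
    (fun t : Fin j => (Pi.basisFun F (Fin d)) (Fin.castLE h t))), ?_⟩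
  have hli : LinearIndependent F (fun t : Fin j => (Pi.basisFun F (Fin d)) (Fin.castLE h t)) :=
    (Pi.basisFun F (Fin d)).linearIndependent.comp _ (Fin.castLE_injective h)
  rw [finrank_span_eq_card hli, Fintype.card_fin]


/-- `M(P) ∼ ∏_{j=1}^d r_j(P, L)`. -/
theorem stmt11 (d : ℕ) (hd : 2 ≤ d) :
    ∃ c C : ℝ, 0 < c ∧ 0 < C ∧
      ∀ (F : Type) [Field F] (N : ℕ) (l : Fin N → Set (Fin d → F)),
        (∀ i, IsLine (l i)) →
        ∀ P : Fin d → F,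
          c * ∏ j ∈ Finset.Icc 1 d, (jthMin l P j : ℝ) ≤ (jointMult l P : ℝ) ∧
          (jointMult l P : ℝ) ≤ C * ∏ j ∈ Finset.Icc 1 d, (jthMin l P j : ℝ) := by
  classical
  refine ⟨1, d.factorial, one_pos, by positivity, ?_⟩
  intro F _ N l hl P
  -- directions
  have hdir : ∀ i : Fin N, ∃ v : Fin d → F, v ≠ 0 ∧ (P ∈ l i → l i = lineThrough P v) := by
    intro i
    obtain ⟨a, v, hv, hs⟩ := hl i
    exact ⟨v, hv, fun hP => by rw [hs]; exact line_eq_lineThrough (by rw [← hs]; exact hP)⟩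
  choose u hu0 hul using hdir
  set S : Finset (Fin N) := Finset.univ.filter (fun i => P ∈ l i) with hS
  have hmemS : ∀ i, i ∈ S ↔ P ∈ l i := by intro i; simp [hS]
  -- the filter description of jthMin-sets
  have hset : ∀ V : Submodule F (Fin d → F),
      {i : Fin N | P ∈ l i ∧ ¬ LineParallel (l i) V} = ↑(S.filter (fun i => u i ∉ V)) := by
    intro V
    ext i
    constructor
    · rintro ⟨hP, hnp⟩
      rw [Finset.mem_coe, Finset.mem_filter]
      exact ⟨(hmemS i).2 hP, fun hV => hnp ((lineParallel_iff (hu0 i) (hul i hP) V).2 hV)⟩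
    · intro h
      rw [Finset.mem_coe, Finset.mem_filter] at h
      obtain ⟨hiS, hV⟩ := h
      have hP := (hmemS i).1 hiS
      exact ⟨hP, fun hp => hV ((lineParallel_iff (hu0 i) (hul i hP) V).1 hp)⟩
  have hncard : ∀ V : Submodule F (Fin d → F),
      Set.ncard {i : Fin N | P ∈ l i ∧ ¬ LineParallel (l i) V} =
        (S.filter (fun i => u i ∉ V)).card := by
    intro V; rw [hset V, Set.ncard_coe_finset]
  -- jointMult as a Finset card
  set Td := Finset.univ.filter (fun ι : Fin d → Fin N =>
      (∀ j, ι j ∈ S) ∧ LinearIndependent F (u ∘ ι)) with hTd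
  have hJM : jointMult l P = Td.card := by
    rw [jointMult, ← Set.ncard_coe_finset]
    congr 1
    ext ι
    simp only [Set.mem_setOf_eq, hTd, Finset.coe_filter, Finset.mem_univ, true_and]
    constructor
    · rintro ⟨v, hv, hvl⟩
      have hPmem : ∀ j, P ∈ l (ι j) := fun j => by
        rw [hvl j]; exact mem_lineThrough_self P (v j)
      have hc : ∀ j, ∃ c : F, c ≠ 0 ∧ u (ι j) = c • v j := by
        intro j
        apply dir_smul_of_lineThrough_eq (hu0 (ι j))
        rw [← hvl j, hul (ι j) (hPmem j)]
      choose c hc0 hcv using hc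
      refine ⟨fun j => (hmemS _).2 (hPmem j), ?_⟩
      have : u ∘ ι = (fun j => Units.mk0 (c j) (hc0 j)) • v := by
        funext j
        simp only [Function.comp_apply, Pi.smul_apply', Units.smul_mk0]
        exact hcv j
      rw [this]
      exact hv.units_smul _
    · rintro ⟨hSm, hli⟩
      exact ⟨fun j => u (ι j), hli, fun j => hul (ι j) ((hmemS _).1 (hSm j))⟩
  -- product reindexing
  have hprod : ∀ f : ℕ → ℝ, ∏ j ∈ Finset.Icc 1 d, f j = ∏ j ∈ Finset.range d, f (j + 1) := by
    intro f
    rw [← Finset.Ico_add_one_right_eq_Icc, Finset.prod_Ico_eq_prod_range]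
    have : d + 1 - 1 = d := by omega
    rw [this]
    exact Finset.prod_congr rfl fun j _ => by rw [Nat.add_comm]
  -- lower bound
  have hlow : ∏ j ∈ Finset.range d, jthMin l P (j + 1) ≤ Td.card := by
    apply lower_count S u (fun k => jthMin l P (k + 1)) ?_ d le_rfl
    intro k V hk hV
    apply Nat.sInf_le
    exact ⟨V, by simpa using hV, (hncard V).symm⟩
  -- upper bound : choose optimal subspaces
  have hWex : ∀ j : ℕ, ∃ V : Submodule F (Fin d → F),
      Module.finrank F ↥V ≤ j ∧ (j < d →
        jthMin l P (j + 1) = (S.filter (fun i => u i ∉ V)).card) := by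
    intro j
    by_cases h : j < d
    · have hne : {k : ℕ | ∃ V : Submodule F (Fin d → F),
          Module.finrank F V = (j + 1) - 1 ∧
          k = Set.ncard {i : Fin N | P ∈ l i ∧ ¬ LineParallel (l i) V}}.Nonempty := by
        obtain ⟨V, hV⟩ := exists_finrank_eq F d j h.le
        exact ⟨_, V, by simpa using hV, rfl⟩
      obtain ⟨V, hV1, hV2⟩ := Nat.sInf_mem hne
      refine ⟨V, by simp at hV1; omega, fun _ => ?_⟩
      rw [jthMin, hV2, hncard V]
    · exact ⟨⊥, by simp, fun h' => absurd h' h⟩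
  choose W hW1 hW2 using hWex
  have hup : Td.card ≤ d.factorial * ∏ j ∈ Finset.range d, jthMin l P (j + 1) := by
    refine le_trans (upper_count S u W fun j hj => hW1 j) ?_
    apply Nat.mul_le_mul_left
    apply le_of_eq
    refine Finset.prod_congr rfl fun j hj => ?_
    rw [hW2 j (Finset.mem_range.1 hj)]
  -- conclude
  constructor
  · rw [one_mul, hprod fun j => (jthMin l P j : ℝ)]
    rw [hJM] at *
    calc ∏ j ∈ Finset.range d, (jthMin l P (j + 1) : ℝ)
        = ((∏ j ∈ Finset.range d, jthMin l P (j + 1) : ℕ) : ℝ) := by push_cast; ring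
      _ ≤ (Td.card : ℝ) := Nat.cast_le.2 hlow
  · rw [hprod fun j => (jthMin l P j : ℝ), hJM]
    calc (Td.card : ℝ) ≤ ((d.factorial * ∏ j ∈ Finset.range d, jthMin l P (j + 1) : ℕ) : ℝ) :=
          Nat.cast_le.2 hup
      _ = d.factorial * ∏ j ∈ Finset.range d, (jthMin l P (j + 1) : ℝ) := by push_cast; ring
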